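/- Let (g,R,P,S) be an admissible quadruple for the differential problem in ℝⁿ on [a,b]. (i) If t₀ ∈ (a,b] is a (P,S)-focal instant and the restriction of g to the subspace 𝕁[t₀] = {J(t₀) : J ∈ 𝕁} is nondegenerate, then there exists δ > 0 such that no instant t ∈ (a,b] with 0 < |t − t₀| < δ is (P,S)-focal. (ii) There exists ε > 0 such that no instant t ∈ (a, a+ε] is (P,S)-focal. -/

import Mathlib

open Set

/-- The `g`-orthogonal complement of `P` in `ℝⁿ`. -/
def gOrtho {n : ℕ} (g : (Fin n → ℝ) →ₗ[ℝ] (Fin n → ℝ) →ₗ[ℝ] ℝ)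
    (P : Submodule ℝ (Fin n → ℝ)) : Set (Fin n → ℝ) :=
  {x | ∀ p ∈ P, g x p = 0}

/-- A `(P,S)`-solution: a `C²` map `J : [a,b] → ℝⁿ` with `J'' = R(t) J` on `[a,b]`,
`J(a) ∈ P` and `J'(a) + S[J(a)] ∈ P^⊥`. -/
def IsPSSolution {n : ℕ} (g : (Fin n → ℝ) →ₗ[ℝ] (Fin n → ℝ) →ₗ[ℝ] ℝ)
    (R : ℝ → (Fin n → ℝ) →L[ℝ] (Fin n → ℝ))
    (P : Submodule ℝ (Fin n → ℝ)) (S : (Fin n → ℝ) →ₗ[ℝ] (Fin n → ℝ))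
    (a b : ℝ) (J : ℝ → Fin n → ℝ) : Prop :=
  ContDiffOn ℝ 2 J (Icc a b) ∧
  (∀ t ∈ Icc a b, derivWithin (derivWithin J (Icc a b)) (Icc a b) t = R t (J t)) ∧
  J a ∈ P ∧ (derivWithin J (Icc a b) a + S (J a)) ∈ gOrtho g P

/-- `t` is a `(P,S)`-focal instant: some nonzero `(P,S)`-solution vanishes at `t`. -/
def IsFocal {n : ℕ} (g : (Fin n → ℝ) →ₗ[ℝ] (Fin n → ℝ) →ₗ[ℝ] ℝ)
    (R : ℝ → (Fin n → ℝ) →L[ℝ] (Fin n → ℝ))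
    (P : Submodule ℝ (Fin n → ℝ)) (S : (Fin n → ℝ) →ₗ[ℝ] (Fin n → ℝ))
    (a b : ℝ) (t : ℝ) : Prop :=
  ∃ J : ℝ → Fin n → ℝ, IsPSSolution g R P S a b J ∧ (∃ s ∈ Icc a b, J s ≠ 0) ∧ J t = 0

/-- `𝕁[t] = {J(t) : J a (P,S)-solution}`. -/
def solSpace {n : ℕ} (g : (Fin n → ℝ) →ₗ[ℝ] (Fin n → ℝ) →ₗ[ℝ] ℝ)
    (R : ℝ → (Fin n → ℝ) →L[ℝ] (Fin n → ℝ))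
    (P : Submodule ℝ (Fin n → ℝ)) (S : (Fin n → ℝ) →ₗ[ℝ] (Fin n → ℝ))
    (a b : ℝ) (t : ℝ) : Set (Fin n → ℝ) :=
  {v | ∃ J : ℝ → Fin n → ℝ, IsPSSolution g R P S a b J ∧ J t = v}

namespace FocalAux

open Filter Topology Real NNReal

variable {n : ℕ} {g : (Fin n → ℝ) →ₗ[ℝ] (Fin n → ℝ) →ₗ[ℝ] ℝ}
  {R : ℝ → (Fin n → ℝ) →L[ℝ] (Fin n → ℝ)}
  {P : Submodule ℝ (Fin n → ℝ)} {S : (Fin n → ℝ) →ₗ[ℝ] (Fin n → ℝ)}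
  {a b : ℝ}

/-- Just the ODE part of being a solution. -/
def OdeSol (R : ℝ → (Fin n → ℝ) →L[ℝ] (Fin n → ℝ)) (a b : ℝ) (J : ℝ → Fin n → ℝ) : Prop :=
  ContDiffOn ℝ 2 J (Icc a b) ∧
  (∀ t ∈ Icc a b, derivWithin (derivWithin J (Icc a b)) (Icc a b) t = R t (J t))

theorem ode_of {J : ℝ → Fin n → ℝ} (h : IsPSSolution g R P S a b J) :
    OdeSol R a b J := ⟨h.1, h.2.1⟩

variable {J J' : ℝ → Fin n → ℝ}

theorem OdeSol.cont (hJ : OdeSol R a b J) : ContinuousOn J (Icc a b) :=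
  hJ.1.continuousOn

theorem OdeSol.diffOn (hJ : OdeSol R a b J) : DifferentiableOn ℝ J (Icc a b) :=
  hJ.1.differentiableOn (by norm_num)

theorem OdeSol.hd1 (hJ : OdeSol R a b J) {t : ℝ} (ht : t ∈ Icc a b) :
    HasDerivWithinAt J (derivWithin J (Icc a b) t) (Icc a b) t :=
  (hJ.diffOn t ht).hasDerivWithinAt

theorem OdeSol.contDiffOnDeriv (hab : a < b) (hJ : OdeSol R a b J) :
    ContDiffOn ℝ 1 (derivWithin J (Icc a b)) (Icc a b) :=
  hJ.1.derivWithin (uniqueDiffOn_Icc hab) (by norm_num)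

theorem OdeSol.diffOnDeriv (hab : a < b) (hJ : OdeSol R a b J) :
    DifferentiableOn ℝ (derivWithin J (Icc a b)) (Icc a b) :=
  (hJ.contDiffOnDeriv hab).differentiableOn (by norm_num)

theorem OdeSol.contDeriv (hab : a < b) (hJ : OdeSol R a b J) :
    ContinuousOn (derivWithin J (Icc a b)) (Icc a b) :=
  (hJ.contDiffOnDeriv hab).continuousOn

theorem OdeSol.hd2 (hab : a < b) (hJ : OdeSol R a b J) {t : ℝ} (ht : t ∈ Icc a b) :
    HasDerivWithinAt (derivWithin J (Icc a b)) (R t (J t)) (Icc a b) t := by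
  have := ((hJ.diffOnDeriv hab) t ht).hasDerivWithinAt
  rwa [hJ.2 t ht] at this

/-- The zero function is a `(P,S)`-solution. -/
theorem isPSSolution_zero (hab : a < b) :
    IsPSSolution g R P S a b (fun _ => (0 : Fin n → ℝ)) := by
  have hderiv : ∀ t ∈ Icc a b,
      derivWithin (fun _ : ℝ => (0 : Fin n → ℝ)) (Icc a b) t = 0 := by
    intro t ht
    exact congrFun (derivWithin_fun_const (s := Icc a b) (c := (0 : Fin n → ℝ))) t
  refine ⟨contDiffOn_const, ?_, P.zero_mem, ?_⟩
  · intro t ht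
    rw [derivWithin_congr hderiv (hderiv t ht), hderiv t ht]
    simp
  · rw [hderiv a (left_mem_Icc.2 hab.le)]
    intro p hp
    simp

/-- Sums of solutions are solutions, with additive derivative. -/
theorem sol_add (hab : a < b) (hJ : IsPSSolution g R P S a b J)
    (hJ' : IsPSSolution g R P S a b J') :
    IsPSSolution g R P S a b (fun t => J t + J' t) ∧
      (∀ t ∈ Icc a b, derivWithin (fun t => J t + J' t) (Icc a b) t
        = derivWithin J (Icc a b) t + derivWithin J' (Icc a b) t) := by
  have hderiv : ∀ t ∈ Icc a b, derivWithin (fun t => J t + J' t) (Icc a b) t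
      = derivWithin J (Icc a b) t + derivWithin J' (Icc a b) t := by
    intro t ht
    exact derivWithin_fun_add ((ode_of hJ).diffOn t ht)
      ((ode_of hJ').diffOn t ht)
  refine ⟨⟨hJ.1.add hJ'.1, ?_, P.add_mem hJ.2.2.1 hJ'.2.2.1, ?_⟩, hderiv⟩
  · intro t ht
    rw [derivWithin_congr hderiv (hderiv t ht),
      derivWithin_fun_add
        ((ode_of hJ).diffOnDeriv hab t ht) ((ode_of hJ').diffOnDeriv hab t ht),
      hJ.2.1 t ht, hJ'.2.1 t ht]
    simp
  · rw [hderiv a (left_mem_Icc.2 hab.le)]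
    intro p hp
    have h1 := hJ.2.2.2 p hp
    have h2 := hJ'.2.2.2 p hp
    simp only [map_add, LinearMap.add_apply] at *
    linarith [h1, h2]

/-- Scalar multiples of solutions are solutions, with scaled derivative. -/
theorem sol_smul (hab : a < b) (c : ℝ) (hJ : IsPSSolution g R P S a b J) :
    IsPSSolution g R P S a b (fun t => c • J t) ∧
      (∀ t ∈ Icc a b, derivWithin (fun t => c • J t) (Icc a b) t
        = c • derivWithin J (Icc a b) t) := by
  have hderiv : ∀ t ∈ Icc a b, derivWithin (fun t => c • J t) (Icc a b) t
      = c • derivWithin J (Icc a b) t := by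
    intro t ht
    exact derivWithin_fun_const_smul c ((ode_of hJ).diffOn t ht)
  refine ⟨⟨hJ.1.const_smul c, ?_, P.smul_mem c hJ.2.2.1, ?_⟩, hderiv⟩
  · intro t ht
    rw [derivWithin_congr hderiv (hderiv t ht),
      derivWithin_fun_const_smul c
        ((ode_of hJ).diffOnDeriv hab t ht),
      hJ.2.1 t ht]
    simp
  · rw [hderiv a (left_mem_Icc.2 hab.le)]
    intro p hp
    have h1 := hJ.2.2.2 p hp
    simp only [map_add, map_smul, LinearMap.add_apply, LinearMap.smul_apply,
      smul_eq_mul] at *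
    rw [← mul_add, h1, mul_zero]



variable {C : ℝ}

def vf (R : ℝ → (Fin n → ℝ) →L[ℝ] (Fin n → ℝ)) (a b : ℝ) :
    ℝ → ((Fin n → ℝ) × (Fin n → ℝ)) → ((Fin n → ℝ) × (Fin n → ℝ)) :=
  fun t x => (x.2, R (min (max t a) b) x.1)

noncomputable def pairF (a b : ℝ) (J : ℝ → Fin n → ℝ) : ℝ → (Fin n → ℝ) × (Fin n → ℝ) :=
  fun t => (J t, derivWithin J (Icc a b) t)

noncomputable def Kc (C : ℝ) : NNReal := ⟨max 1 C, le_trans zero_le_one (le_max_left 1 C)⟩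

theorem vf_lip (hab : a ≤ b) (hC : ∀ t ∈ Icc a b, ‖R t‖ ≤ C) (t : ℝ) :
    LipschitzWith (Kc C) (vf R a b t) := by
  set T := min (max t a) b with hT
  have hTmem : T ∈ Icc a b := ⟨le_min (le_trans (le_max_right t a) (le_refl _)) hab,
    min_le_right _ _⟩
  have l1 : LipschitzWith 1 (fun x : (Fin n → ℝ) × (Fin n → ℝ) => x.2) :=
    LipschitzWith.prod_snd
  have l2 : LipschitzWith (‖R T‖₊ * 1) (fun x : (Fin n → ℝ) × (Fin n → ℝ) => R T x.1) :=
    (R T).lipschitz.comp LipschitzWith.prod_fst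
  refine (l1.prodMk l2).weaken ?_
  rw [← NNReal.coe_le_coe]
  push_cast
  rw [mul_one]
  refine max_le ?_ ?_
  · exact le_max_left 1 C
  · exact le_trans (hC T hTmem) (le_max_right 1 C)

theorem pairF_contOn (hab : a < b) (hJ : OdeSol R a b J) :
    ContinuousOn (pairF a b J) (Icc a b) :=
  (hJ.cont).prodMk (hJ.contDeriv hab)

theorem pairF_hasDeriv_Ici (hab : a < b) (hJ : OdeSol R a b J) {t : ℝ} (ht : t ∈ Ico a b) :
    HasDerivWithinAt (pairF a b J) (vf R a b t (pairF a b J t)) (Ici t) t := by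
  have htm : t ∈ Icc a b := ⟨ht.1, ht.2.le⟩
  have h1 := (hJ.hd1 htm).prodMk (hJ.hd2 hab htm)
  have h2 : vf R a b t (pairF a b J t) = (derivWithin J (Icc a b) t, R t (J t)) := by
    simp only [vf, pairF, max_eq_left ht.1, min_eq_left ht.2.le]
  rw [h2]
  exact h1.mono_of_mem_nhdsWithin (Icc_mem_nhdsGE_of_mem ht)

theorem pairF_hasDeriv_Iic (hab : a < b) (hJ : OdeSol R a b J) {t : ℝ} (ht : t ∈ Ioc a b) :
    HasDerivWithinAt (pairF a b J) (vf R a b t (pairF a b J t)) (Iic t) t := by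
  have htm : t ∈ Icc a b := ⟨ht.1.le, ht.2⟩
  have h1 := (hJ.hd1 htm).prodMk (hJ.hd2 hab htm)
  have h2 : vf R a b t (pairF a b J t) = (derivWithin J (Icc a b) t, R t (J t)) := by
    simp only [vf, pairF, max_eq_left ht.1.le, min_eq_left ht.2]
  rw [h2]
  exact h1.mono_of_mem_nhdsWithin (Icc_mem_nhdsLE_of_mem ht)

/-- Grönwall: distance between two solutions, in the `C¹` sense. -/
theorem sol_dist (hab : a < b) (hC : ∀ t ∈ Icc a b, ‖R t‖ ≤ C)
    (hJ : OdeSol R a b J) (hJ' : OdeSol R a b J') {t : ℝ} (ht : t ∈ Icc a b) :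
    dist (pairF a b J t) (pairF a b J' t)
      ≤ dist (pairF a b J a) (pairF a b J' a) * Real.exp ((Kc C : ℝ) * (b - a)) := by
  have h := dist_le_of_trajectories_ODE (v := vf R a b) (K := Kc C)
    (vf_lip hab.le hC) (pairF_contOn hab hJ) (fun s hs => pairF_hasDeriv_Ici hab hJ hs)
    (pairF_contOn hab hJ') (fun s hs => pairF_hasDeriv_Ici hab hJ' hs)
    (le_refl _) t ht
  refine h.trans ?_
  have : (Kc C : ℝ) * (t - a) ≤ (Kc C : ℝ) * (b - a) :=
    mul_le_mul_of_nonneg_left (by linarith [ht.2]) (Kc C).coe_nonneg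
  exact mul_le_mul_of_nonneg_left (Real.exp_le_exp.2 this) dist_nonneg

theorem odeSol_zero (hab : a < b) : OdeSol R a b (fun _ => (0 : Fin n → ℝ)) := by
  have hderiv : ∀ t ∈ Icc a b,
      derivWithin (fun _ : ℝ => (0 : Fin n → ℝ)) (Icc a b) t = 0 := by
    intro t ht
    exact congrFun (derivWithin_fun_const (s := Icc a b) (c := (0 : Fin n → ℝ))) t
  refine ⟨contDiffOn_const, ?_⟩
  intro t ht
  rw [derivWithin_congr hderiv (hderiv t ht), hderiv t ht]
  simp

theorem pairF_zero (hab : a < b) {t : ℝ} (ht : t ∈ Icc a b) :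
    pairF a b (fun _ => (0 : Fin n → ℝ)) t = 0 := by
  simp only [pairF]
  rw [congrFun (derivWithin_fun_const (s := Icc a b) (c := (0 : Fin n → ℝ))) t]
  simp

/-- Grönwall growth bound for a single solution. -/
theorem sol_bound (hab : a < b) (hC : ∀ t ∈ Icc a b, ‖R t‖ ≤ C)
    (hJ : OdeSol R a b J) {t : ℝ} (ht : t ∈ Icc a b) :
    ‖pairF a b J t‖ ≤ ‖pairF a b J a‖ * Real.exp ((Kc C : ℝ) * (b - a)) := by
  have h := sol_dist hab hC hJ (odeSol_zero hab) ht
  rwa [pairF_zero hab ht, pairF_zero hab (left_mem_Icc.2 hab.le), dist_zero_right,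
    dist_zero_right] at h

/-- Uniqueness: a solution vanishing to first order at some point of `[a,b]`
vanishes identically (together with its derivative). -/
theorem sol_zero_of_zero_at (hab : a < b) (hC : ∀ t ∈ Icc a b, ‖R t‖ ≤ C)
    (hJ : OdeSol R a b J) {t₀ : ℝ} (ht₀ : t₀ ∈ Icc a b) (h0 : J t₀ = 0)
    (h1 : derivWithin J (Icc a b) t₀ = 0) :
    ∀ t ∈ Icc a b, pairF a b J t = 0 := by
  have hpair0 : pairF a b J t₀ = 0 := by
    simp only [pairF, h0, h1]; rfl
  have ha0 : pairF a b J a = 0 := by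
    rcases eq_or_lt_of_le ht₀.1 with h | h
    · subst h; exact hpair0
    · have := ODE_solution_unique_of_mem_Icc_left (v := vf R a b) (K := Kc C)
        (s := fun _ => univ) (a := a) (b := t₀)
        (fun u _ => LipschitzWith.lipschitzOnWith (s := univ) (vf_lip hab.le hC u))
        ((pairF_contOn hab hJ).mono (Icc_subset_Icc_right ht₀.2))
        (fun u hu => (pairF_hasDeriv_Iic hab hJ ⟨hu.1, hu.2.trans ht₀.2⟩))
        (fun u hu => mem_univ _)
        (continuousOn_const (c := (0 : (Fin n → ℝ) × (Fin n → ℝ))))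
        (fun u hu => by
          have : vf R a b u 0 = 0 := by simp [vf]
          rw [this]
          exact hasDerivWithinAt_const _ _ _)
        (fun u hu => mem_univ _) (by simpa using hpair0)
      have := this (left_mem_Icc.2 h.le)
      simpa using this
  intro t ht
  have h := sol_dist hab hC hJ (odeSol_zero hab) ht
  rw [pairF_zero hab ht, pairF_zero hab (left_mem_Icc.2 hab.le), ha0] at h
  simpa using h

/-- The bilinear form as a continuous bilinear map. -/
noncomputable def gc (g : (Fin n → ℝ) →ₗ[ℝ] (Fin n → ℝ) →ₗ[ℝ] ℝ) :
    (Fin n → ℝ) →L[ℝ] ((Fin n → ℝ) →L[ℝ] ℝ) :=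
  LinearMap.toContinuousLinearMap
    { toFun := fun x => LinearMap.toContinuousLinearMap (g x)
      map_add' := by intro x y; ext z; simp
      map_smul' := by intro c x; ext z; simp }

@[simp] theorem gc_apply (g : (Fin n → ℝ) →ₗ[ℝ] (Fin n → ℝ) →ₗ[ℝ] ℝ) (x y : Fin n → ℝ) :
    gc g x y = g x y := rfl

theorem g_bound (g : (Fin n → ℝ) →ₗ[ℝ] (Fin n → ℝ) →ₗ[ℝ] ℝ) (x y : Fin n → ℝ) :
    |g x y| ≤ ‖gc g‖ * ‖x‖ * ‖y‖ := by
  have := (gc g).le_opNorm₂ x y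
  simpa [Real.norm_eq_abs] using this

variable {g : (Fin n → ℝ) →ₗ[ℝ] (Fin n → ℝ) →ₗ[ℝ] ℝ}
  {P : Submodule ℝ (Fin n → ℝ)} {S : (Fin n → ℝ) →ₗ[ℝ] (Fin n → ℝ)}

/-- `𝕁[t₀]` as a submodule. -/
noncomputable def Vsol (g : (Fin n → ℝ) →ₗ[ℝ] (Fin n → ℝ) →ₗ[ℝ] ℝ)
    (R : ℝ → (Fin n → ℝ) →L[ℝ] (Fin n → ℝ)) (P : Submodule ℝ (Fin n → ℝ))
    (S : (Fin n → ℝ) →ₗ[ℝ] (Fin n → ℝ)) {a b : ℝ} (t₀ : ℝ) (hab : a < b) :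
    Submodule ℝ (Fin n → ℝ) where
  carrier := solSpace g R P S a b t₀
  zero_mem' := ⟨fun _ => 0, isPSSolution_zero hab, rfl⟩
  add_mem' := by
    rintro x y ⟨J, hJ, rfl⟩ ⟨J', hJ', rfl⟩
    exact ⟨fun t => J t + J' t, (sol_add hab hJ hJ').1, rfl⟩
  smul_mem' := by
    rintro c x ⟨J, hJ, rfl⟩
    exact ⟨fun t => c • J t, (sol_smul hab c hJ).1, rfl⟩

/-- The space of initial data of solutions, as a submodule. -/
noncomputable def Dsub (g : (Fin n → ℝ) →ₗ[ℝ] (Fin n → ℝ) →ₗ[ℝ] ℝ)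
    (R : ℝ → (Fin n → ℝ) →L[ℝ] (Fin n → ℝ)) (P : Submodule ℝ (Fin n → ℝ))
    (S : (Fin n → ℝ) →ₗ[ℝ] (Fin n → ℝ)) {a b : ℝ} (hab : a < b) :
    Submodule ℝ ((Fin n → ℝ) × (Fin n → ℝ)) where
  carrier := {v | ∃ J, IsPSSolution g R P S a b J ∧ pairF a b J a = v}
  zero_mem' := ⟨fun _ => 0, isPSSolution_zero hab, pairF_zero hab (left_mem_Icc.2 hab.le)⟩
  add_mem' := by
    rintro x y ⟨J, hJ, rfl⟩ ⟨J', hJ', rfl⟩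
    refine ⟨fun t => J t + J' t, (sol_add hab hJ hJ').1, ?_⟩
    have := (sol_add hab hJ hJ').2 a (left_mem_Icc.2 hab.le)
    exact Prod.ext_iff.mpr ⟨rfl, this⟩
  smul_mem' := by
    rintro c x ⟨J, hJ, rfl⟩
    refine ⟨fun t => c • J t, (sol_smul hab c hJ).1, ?_⟩
    have := (sol_smul hab c hJ).2 a (left_mem_Icc.2 hab.le)
    exact Prod.ext_iff.mpr ⟨rfl, this⟩

/-- The conserved "symplectic" identity for pairs of solutions. -/
theorem lagrangian (hab : a < b)
    (hgsymm : ∀ x y, g x y = g y x)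
    (hRsymm : ∀ t ∈ Icc a b, ∀ x y, g (R t x) y = g x (R t y))
    (hSsymm : ∀ x ∈ P, ∀ y ∈ P, g (S x) y = g x (S y))
    {J J' : ℝ → Fin n → ℝ}
    (hJ : IsPSSolution g R P S a b J) (hJ' : IsPSSolution g R P S a b J')
    {t : ℝ} (ht : t ∈ Icc a b) :
    g (derivWithin J (Icc a b) t) (J' t) = g (J t) (derivWithin J' (Icc a b) t) := by
  set φ : ℝ → ℝ := fun u => gc g (derivWithin J (Icc a b) u) (J' u)
    - gc g (J u) (derivWithin J' (Icc a b) u) with hφ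
  have hder : ∀ u ∈ Icc a b, HasDerivWithinAt φ 0 (Icc a b) u := by
    intro u hu
    have c1 : HasDerivWithinAt (fun u => gc g (derivWithin J (Icc a b) u))
        (gc g (R u (J u))) (Icc a b) u :=
      ((gc g).hasFDerivAt).comp_hasDerivWithinAt u ((ode_of hJ).hd2 hab hu)
    have c2 : HasDerivWithinAt (fun u => gc g (J u))
        (gc g (derivWithin J (Icc a b) u)) (Icc a b) u :=
      ((gc g).hasFDerivAt).comp_hasDerivWithinAt u ((ode_of hJ).hd1 hu)
    have t1 := c1.clm_apply ((ode_of hJ').hd1 hu)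
    have t2 := c2.clm_apply ((ode_of hJ').hd2 hab hu)
    have hsum : HasDerivWithinAt φ _ (Icc a b) u := t1.sub t2
    convert hsum using 1
    simp only [gc_apply]
    rw [hRsymm u hu (J u) (J' u)]
    ring
  have hconst : ∀ u ∈ Icc a b, φ u = φ a := by
    intro u hu
    have := (convex_Icc a b).norm_image_sub_le_of_norm_hasDerivWithin_le
      (C := 0) (f' := fun _ => (0:ℝ)) hder (fun x hx => by simp) (left_mem_Icc.2 hab.le) hu
    rw [zero_mul] at this
    have h0 : ‖φ u - φ a‖ ≤ 0 := this
    have := norm_le_zero_iff.1 h0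
    linarith [sub_eq_zero.1 this]
  have hφa : φ a = 0 := by
    have hmem := left_mem_Icc.2 hab.le
    have hz := hJ.2.2.2
    have hz' := hJ'.2.2.2
    have e1 : g (derivWithin J (Icc a b) a) (J' a)
        = g (derivWithin J (Icc a b) a + S (J a)) (J' a) - g (S (J a)) (J' a) := by
      simp only [map_add, LinearMap.add_apply]; ring
    have e2 : g (derivWithin J' (Icc a b) a) (J a)
        = g (derivWithin J' (Icc a b) a + S (J' a)) (J a) - g (S (J' a)) (J a) := by
      simp only [map_add, LinearMap.add_apply]; ring
    have hz1 : g (derivWithin J (Icc a b) a + S (J a)) (J' a) = 0 := hz (J' a) hJ'.2.2.1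
    have hz2 : g (derivWithin J' (Icc a b) a + S (J' a)) (J a) = 0 := hz' (J a) hJ.2.2.1
    have hS : g (S (J a)) (J' a) = g (S (J' a)) (J a) := by
      rw [hSsymm (J a) hJ.2.2.1 (J' a) hJ'.2.2.1, hgsymm]
    simp only [hφ, gc_apply]
    rw [hgsymm (J a) (derivWithin J' (Icc a b) a), e1, e2, hz1, hz2, hS]
    ring
  have := hconst t ht
  rw [hφa] at this
  have : gc g (derivWithin J (Icc a b) t) (J' t) = gc g (J t) (derivWithin J' (Icc a b) t) := by
    simp only [hφ] at this
    linarith [this]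
  simpa using this

/-- Quantitative first-order Taylor estimate for solutions. -/
theorem taylor (hab : a < b) (hC : ∀ t ∈ Icc a b, ‖R t‖ ≤ C) (hC0 : 0 ≤ C)
    {B : ℝ} (hB : ∀ t ∈ Icc a b, ‖J t‖ ≤ B) (hJ : OdeSol R a b J)
    {t₀ t : ℝ} (ht₀ : t₀ ∈ Icc a b) (ht : t ∈ Icc a b) :
    ‖J t - J t₀ - (t - t₀) • derivWithin J (Icc a b) t₀‖ ≤ C * B * (t - t₀) ^ 2 := by
  have hB0 : 0 ≤ B := le_trans (norm_nonneg _) (hB t₀ ht₀)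
  have step1 : ∀ u ∈ Icc a b,
      ‖derivWithin J (Icc a b) u - derivWithin J (Icc a b) t₀‖ ≤ C * B * |u - t₀| := by
    intro u hu
    have := (convex_Icc a b).norm_image_sub_le_of_norm_hasDerivWithin_le
      (C := C * B) (f' := fun x => R x (J x)) (fun x hx => hJ.hd2 hab hx)
      (fun x hx => le_trans ((R x).le_opNorm (J x))
        (mul_le_mul (hC x hx) (hB x hx) (norm_nonneg _) hC0)) ht₀ hu
    simpa [Real.norm_eq_abs] using this
  set s' : Set ℝ := Icc (min t₀ t) (max t₀ t) with hs'
  have hsub : s' ⊆ Icc a b :=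
    Icc_subset_Icc (le_min ht₀.1 ht.1) (max_le ht₀.2 ht.2)
  have habs : ∀ u ∈ s', |u - t₀| ≤ |t - t₀| := by
    intro u hu
    have h1 : min t₀ t ≤ u := hu.1
    have h2 : u ≤ max t₀ t := hu.2
    rcases le_total t₀ t with h | h
    · rw [min_eq_left h] at h1; rw [max_eq_right h] at h2
      rw [abs_of_nonneg (by linarith), abs_of_nonneg (by linarith)]; linarith
    · rw [min_eq_right h] at h1; rw [max_eq_left h] at h2
      rw [abs_of_nonpos (by linarith), abs_of_nonpos (by linarith)]; linarith
  set v := derivWithin J (Icc a b) t₀ with hv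
  have hder : ∀ u ∈ s', HasDerivWithinAt (fun y => J y - y • v)
      (derivWithin J (Icc a b) u - v) s' u := by
    intro u hu
    have h1 := (hJ.hd1 (hsub hu)).mono hsub
    have h2 : HasDerivWithinAt (fun y : ℝ => y • v) ((1:ℝ) • v) s' u :=
      (hasDerivWithinAt_id u s').smul_const v
    rw [one_smul] at h2
    exact h1.sub h2
  have hmvi := (convex_Icc (min t₀ t) (max t₀ t)).norm_image_sub_le_of_norm_hasDerivWithin_le
    (C := C * B * |t - t₀|) (f' := fun u => derivWithin J (Icc a b) u - v) hder
    (fun x hx => le_trans (step1 x (hsub hx))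
      (mul_le_mul_of_nonneg_left (habs x hx) (by positivity)))
    ⟨min_le_left _ _, le_max_left _ _⟩ ⟨min_le_right _ _, le_max_right _ _⟩
  have hre : J t - t • v - (J t₀ - t₀ • v) = J t - J t₀ - (t - t₀) • v := by
    rw [sub_smul]; abel
  rw [hre, Real.norm_eq_abs] at hmvi
  have habs2 : C * B * |t - t₀| * |t - t₀| = C * B * (t - t₀) ^ 2 := by
    rw [mul_assoc, abs_mul_abs_self]; ring
  linarith [hmvi]

/-- Any focal instant admits a solution normalized to unit initial data. -/
theorem exists_normalized (hab : a < b) (hC : ∀ t ∈ Icc a b, ‖R t‖ ≤ C)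
    {t : ℝ} (hf : IsFocal g R P S a b t) :
    ∃ J, IsPSSolution g R P S a b J ∧ J t = 0 ∧ ‖pairF a b J a‖ = 1 := by
  obtain ⟨J0, hJ0, ⟨s, hs, hs0⟩, hJ0t⟩ := hf
  have hv0 : pairF a b J0 a ≠ 0 := by
    intro h
    have h1 : J0 a = 0 := congrArg Prod.fst h
    have h2 : derivWithin J0 (Icc a b) a = 0 := congrArg Prod.snd h
    have := sol_zero_of_zero_at hab hC (ode_of hJ0) (left_mem_Icc.2 hab.le) h1 h2 s hs
    exact hs0 (congrArg Prod.fst this)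
  set c := ‖pairF a b J0 a‖⁻¹ with hc
  obtain ⟨hsol, hd⟩ := sol_smul hab c hJ0
  refine ⟨fun u => c • J0 u, hsol, by show c • J0 t = 0; rw [hJ0t, smul_zero], ?_⟩
  have hp : pairF a b (fun u => c • J0 u) a = c • pairF a b J0 a :=
    Prod.ext_iff.mpr ⟨rfl, hd a (left_mem_Icc.2 hab.le)⟩
  rw [hp, norm_smul, Real.norm_eq_abs, hc,
    abs_of_nonneg (inv_nonneg.2 (norm_nonneg _))]
  exact inv_mul_cancel₀ (norm_ne_zero_iff.2 hv0)

/-- Part (ii): no focal instants immediately after `a`. -/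
theorem part2 (hab : a < b)
    (hRcont : ContinuousOn R (Icc a b))
    (hPnd : ∀ x ∈ P, (∀ y ∈ P, g x y = 0) → x = 0) :
    ∃ ε > 0, ∀ t ∈ Ioc a b, t ≤ a + ε → ¬ IsFocal g R P S a b t := by
  obtain ⟨C, hC⟩ := isCompact_Icc.exists_bound_of_continuousOn hRcont
  have hC0 : 0 ≤ C := le_trans (norm_nonneg _) (hC a (left_mem_Icc.2 hab.le))
  set CG : ℝ := Real.exp ((Kc C : ℝ) * (b - a)) with hCG
  have hCG0 : 0 < CG := Real.exp_pos _
  by_contra hcon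
  push_neg at hcon
  have hseq : ∀ k : ℕ, ∃ t, t ∈ Ioc a b ∧ t ≤ a + 1/(k+1) ∧ IsFocal g R P S a b t := by
    intro k
    obtain ⟨t, ht, h1, h2⟩ := hcon (1/(k+1)) (by positivity)
    exact ⟨t, ht, h1, h2⟩
  choose tk htk h1k h2k using hseq
  have hsol : ∀ k, ∃ J, IsPSSolution g R P S a b J ∧ J (tk k) = 0 ∧ ‖pairF a b J a‖ = 1 :=
    fun k => exists_normalized hab hC (h2k k)
  choose Jk hJk hJk0 hJkn using hsol
  set sk : ℕ → ℝ := fun k => tk k - a with hsk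
  have hsk0 : ∀ k, 0 < sk k := fun k => by
    have := (htk k).1; simp only [hsk]; linarith
  have hskb : ∀ k, sk k ≤ 1/(k+1) := fun k => by
    have := h1k k; simp only [hsk]; linarith
  have hsk_to : Filter.Tendsto sk atTop (nhds 0) :=
    squeeze_zero (fun k => (hsk0 k).le) hskb tendsto_one_div_add_atTop_nhds_zero_nat
  have hJbnd : ∀ k, ∀ t ∈ Icc a b, ‖Jk k t‖ ≤ CG := by
    intro k t ht
    have h := sol_bound hab hC (ode_of (hJk k)) ht
    rw [hJkn k, one_mul] at h
    exact le_trans (norm_fst_le (pairF a b (Jk k) t)) h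
  set pk : ℕ → (Fin n → ℝ) := fun k => Jk k a with hpk
  set wk : ℕ → (Fin n → ℝ) := fun k => derivWithin (Jk k) (Icc a b) a with hwk
  have hwk1 : ∀ k, ‖wk k‖ ≤ 1 := fun k => le_trans (norm_snd_le (pairF a b (Jk k) a)) (le_of_eq (hJkn k))
  have htay : ∀ k, ‖pk k + sk k • wk k‖ ≤ C * CG * (sk k)^2 := by
    intro k
    have h := taylor hab hC hC0 (hJbnd k) (ode_of (hJk k))
      (left_mem_Icc.2 hab.le) (⟨(htk k).1.le, (htk k).2⟩ : tk k ∈ Icc a b)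
    rw [hJk0 k] at h
    have e : (0 : Fin n → ℝ) - Jk k a - (tk k - a) • derivWithin (Jk k) (Icc a b) a
        = -(pk k + sk k • wk k) := by
      simp only [hpk, hwk, hsk]; abel
    rw [e, norm_neg] at h
    exact h
  have hpk_to : Filter.Tendsto pk atTop (nhds 0) := by
    apply squeeze_zero_norm (a := fun k => C * CG * (sk k)^2 + sk k)
    · intro k
      calc ‖pk k‖ = ‖(pk k + sk k • wk k) - sk k • wk k‖ := by rw [add_sub_cancel_right]
        _ ≤ ‖pk k + sk k • wk k‖ + ‖sk k • wk k‖ := norm_sub_le _ _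
        _ ≤ C * CG * (sk k)^2 + sk k := by
            refine add_le_add (htay k) ?_
            rw [norm_smul, Real.norm_eq_abs, abs_of_pos (hsk0 k)]
            nlinarith [hwk1 k, (hsk0 k).le]
    · have h1 : Filter.Tendsto (fun k => C * CG * (sk k)^2) atTop (nhds 0) := by
        have := (tendsto_const_nhds (x := C * CG)).mul ((hsk_to.pow 2))
        simpa using this
      simpa using h1.add hsk_to
  obtain ⟨w, _, φ, hφmono, hφtend⟩ := tendsto_subseq_of_bounded
    (Metric.isBounded_closedBall (x := (0 : Fin n → ℝ)) (r := 1))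
    (fun k => mem_closedBall_zero_iff.2 (hwk1 k))
  have hφatTop : Filter.Tendsto φ atTop atTop := hφmono.tendsto_atTop
  have hskφ_to : Filter.Tendsto (fun k => sk (φ k)) atTop (nhds 0) := hsk_to.comp hφatTop
  have hpkφ_to : Filter.Tendsto (fun k => pk (φ k)) atTop (nhds 0) := hpk_to.comp hφatTop
  -- w ∈ P
  have hqdiff : Filter.Tendsto (fun k => (-(sk (φ k))⁻¹) • pk (φ k) - wk (φ k)) atTop (nhds 0) := by
    apply squeeze_zero_norm (a := fun k => C * CG * sk (φ k))
    · intro k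
      have e : (-(sk (φ k))⁻¹) • pk (φ k) - wk (φ k)
          = (-(sk (φ k))⁻¹) • (pk (φ k) + sk (φ k) • wk (φ k)) := by
        rw [smul_add, smul_smul]
        rw [neg_mul, inv_mul_cancel₀ (ne_of_gt (hsk0 (φ k)))]
        simp [sub_eq_add_neg]
      rw [e, norm_smul, Real.norm_eq_abs, abs_neg, abs_inv, abs_of_pos (hsk0 (φ k))]
      have := htay (φ k)
      rw [inv_mul_le_iff₀ (hsk0 (φ k))]
      calc ‖pk (φ k) + sk (φ k) • wk (φ k)‖ ≤ C * CG * (sk (φ k))^2 := htay (φ k)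
        _ = sk (φ k) * (C * CG * sk (φ k)) := by ring
    · have := (tendsto_const_nhds (x := C * CG)).mul hskφ_to
      simpa using this
  have hq_to : Filter.Tendsto (fun k => (-(sk (φ k))⁻¹) • pk (φ k)) atTop (nhds w) := by
    have := hqdiff.add hφtend
    simpa using this
  have hwP : w ∈ P := by
    refine (P.closed_of_finiteDimensional).mem_of_tendsto hq_to
      (Filter.Eventually.of_forall fun k => ?_)
    exact P.smul_mem _ ((hJk (φ k)).2.2.1)
  -- g w y = 0 for all y ∈ P
  have horto : ∀ y ∈ P, g w y = 0 := by
    intro y hy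
    have hkey : ∀ k, g (wk k) y = - g (S (pk k)) y := by
      intro k
      have h := (hJk k).2.2.2 y hy
      simp only [map_add, LinearMap.add_apply] at h
      linarith
    set Sc := LinearMap.toContinuousLinearMap S with hSc
    have hS_to : Filter.Tendsto (fun k => g (S (pk (φ k))) y) atTop (nhds 0) := by
      apply squeeze_zero_norm (a := fun k => ‖gc g‖ * ‖Sc‖ * ‖y‖ * ‖pk (φ k)‖)
      · intro k
        have h1 := g_bound g (S (pk (φ k))) y
        have h2 : ‖S (pk (φ k))‖ ≤ ‖Sc‖ * ‖pk (φ k)‖ := Sc.le_opNorm _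
        rw [Real.norm_eq_abs]
        calc |g (S (pk (φ k))) y| ≤ ‖gc g‖ * ‖S (pk (φ k))‖ * ‖y‖ := h1
          _ ≤ ‖gc g‖ * (‖Sc‖ * ‖pk (φ k)‖) * ‖y‖ := by
              refine mul_le_mul_of_nonneg_right ?_ (norm_nonneg _)
              exact mul_le_mul_of_nonneg_left h2 (norm_nonneg (gc g))
          _ = ‖gc g‖ * ‖Sc‖ * ‖y‖ * ‖pk (φ k)‖ := by ring
      · have := (tendsto_const_nhds (x := ‖gc g‖ * ‖Sc‖ * ‖y‖)).mul
          ((continuous_norm.tendsto (0 : Fin n → ℝ)).comp hpkφ_to)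
        simpa using this
    have hgw : Filter.Tendsto (fun k => g (wk (φ k)) y) atTop (nhds (g w y)) := by
      have hcont : Continuous (fun x : Fin n → ℝ => ((gc g).flip y) x) :=
        ((gc g).flip y).continuous
      have := (hcont.tendsto w).comp hφtend
      exact this
    have hgw' : Filter.Tendsto (fun k => g (wk (φ k)) y) atTop (nhds 0) := by
      have := hS_to.neg
      rw [neg_zero] at this
      convert this using 1
      funext k
      exact hkey (φ k)
    exact tendsto_nhds_unique hgw hgw'
  have hw0 : w = 0 := hPnd w hwP horto
  -- contradiction with unit norm
  have hge : ∀ k, 1 - ‖pk k‖ ≤ ‖wk k‖ := by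
    intro k
    have h : ‖pairF a b (Jk k) a‖ ≤ ‖pk k‖ + ‖wk k‖ := by
      rw [Prod.norm_def]
      exact max_le (le_add_of_nonneg_right (norm_nonneg _))
        (le_add_of_nonneg_left (norm_nonneg _))
    rw [hJkn k] at h
    linarith
  have h1 : Filter.Tendsto (fun k => 1 - ‖pk (φ k)‖) atTop (nhds 1) := by
    have := (tendsto_const_nhds (x := (1:ℝ))).sub
      ((continuous_norm.tendsto (0 : Fin n → ℝ)).comp hpkφ_to)
    simpa using this
  have h2 : Filter.Tendsto (fun k => ‖wk (φ k)‖) atTop (nhds ‖w‖) :=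
    (continuous_norm.tendsto w).comp hφtend
  have h1w : (1:ℝ) ≤ ‖w‖ :=
    le_of_tendsto_of_tendsto h1 h2 (Filter.Eventually.of_forall fun k => hge (φ k))
  rw [hw0, norm_zero] at h1w
  linarith

/-- Part (i): focal instants with nondegenerate `g` on `𝕁[t₀]` are isolated. -/
theorem part1 (hab : a < b)
    (hgsymm : ∀ x y, g x y = g y x)
    (hRcont : ContinuousOn R (Icc a b))
    (hRsymm : ∀ t ∈ Icc a b, ∀ x y, g (R t x) y = g x (R t y))
    (hSsymm : ∀ x ∈ P, ∀ y ∈ P, g (S x) y = g x (S y))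
    {t₀ : ℝ} (ht₀ : t₀ ∈ Ioc a b)
    (hnd : ∀ x ∈ solSpace g R P S a b t₀,
      (∀ y ∈ solSpace g R P S a b t₀, g x y = 0) → x = 0) :
    ∃ δ > 0, ∀ t ∈ Ioc a b, t ≠ t₀ → |t - t₀| < δ → ¬ IsFocal g R P S a b t := by
  obtain ⟨C, hC⟩ := isCompact_Icc.exists_bound_of_continuousOn hRcont
  have hC0 : 0 ≤ C := le_trans (norm_nonneg _) (hC a (left_mem_Icc.2 hab.le))
  set CG : ℝ := Real.exp ((Kc C : ℝ) * (b - a)) with hCG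
  have hCG0 : 0 < CG := Real.exp_pos _
  have ht₀m : t₀ ∈ Icc a b := ⟨ht₀.1.le, ht₀.2⟩
  by_contra hcon
  push_neg at hcon
  have hseq : ∀ k : ℕ, ∃ t, t ∈ Ioc a b ∧ t ≠ t₀ ∧ |t - t₀| < 1/(k+1)
      ∧ IsFocal g R P S a b t := by
    intro k
    obtain ⟨t, ht, h1, h2, h3⟩ := hcon (1/(k+1)) (by positivity)
    exact ⟨t, ht, h1, h2, h3⟩
  choose tk htk hne hlt hfoc using hseq
  have htkm : ∀ k, tk k ∈ Icc a b := fun k => ⟨(htk k).1.le, (htk k).2⟩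
  have hsol : ∀ k, ∃ J, IsPSSolution g R P S a b J ∧ J (tk k) = 0 ∧ ‖pairF a b J a‖ = 1 :=
    fun k => exists_normalized hab hC (hfoc k)
  choose Jk hJk hJk0 hJkn using hsol
  set sk : ℕ → ℝ := fun k => tk k - t₀ with hsk
  have hskne : ∀ k, sk k ≠ 0 := fun k => sub_ne_zero.2 (hne k)
  have hskabs : ∀ k, |sk k| ≤ b - a := by
    intro k
    rw [abs_sub_le_iff]
    constructor
    · linarith [(htkm k).2, ht₀m.1]
    · linarith [(htkm k).1, ht₀m.2]
  have hsk_to : Filter.Tendsto sk atTop (nhds 0) := by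
    apply squeeze_zero_norm (a := fun k : ℕ => 1/((k:ℝ)+1))
    · intro k; exact (hlt k).le
    · exact tendsto_one_div_add_atTop_nhds_zero_nat
  have hJbnd : ∀ k, ∀ t ∈ Icc a b, ‖Jk k t‖ ≤ CG := by
    intro k t ht
    have h := sol_bound hab hC (ode_of (hJk k)) ht
    rw [hJkn k, one_mul] at h
    exact le_trans (norm_fst_le (pairF a b (Jk k) t)) h
  have hXbnd : ∀ k, ‖derivWithin (Jk k) (Icc a b) t₀‖ ≤ CG := by
    intro k
    have h := sol_bound hab hC (ode_of (hJk k)) ht₀m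
    rw [hJkn k, one_mul] at h
    exact le_trans (norm_snd_le (pairF a b (Jk k) t₀)) h
  -- extract convergent subsequence of initial data
  set vk : ℕ → (Fin n → ℝ) × (Fin n → ℝ) := fun k => pairF a b (Jk k) a with hvk
  obtain ⟨v, _, φ, hφmono, hφtend⟩ := tendsto_subseq_of_bounded
    (Metric.isBounded_closedBall (x := (0 : (Fin n → ℝ) × (Fin n → ℝ))) (r := 1))
    (fun k => mem_closedBall_zero_iff.2 (le_of_eq (hJkn k)))
  have hφatTop : Filter.Tendsto φ atTop atTop := hφmono.tendsto_atTop
  have hskφ_to : Filter.Tendsto (fun k => sk (φ k)) atTop (nhds 0) := hsk_to.comp hφatTop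
  -- the limit solution
  have hvD : v ∈ Dsub g R P S hab := by
    refine ((Dsub g R P S hab).closed_of_finiteDimensional).mem_of_tendsto hφtend
      (Filter.Eventually.of_forall fun k => ?_)
    exact ⟨Jk (φ k), hJk (φ k), rfl⟩
  obtain ⟨JL, hJL, hJLv⟩ := hvD
  -- C¹ convergence of the subsequence to JL
  set ek : ℕ → ℝ := fun k => dist (vk (φ k)) v * CG with hek
  have hek_to : Filter.Tendsto ek atTop (nhds 0) := by
    have h1 : Filter.Tendsto (fun k => dist (vk (φ k)) v) atTop (nhds 0) :=
      tendsto_iff_dist_tendsto_zero.1 hφtend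
    have := h1.mul (tendsto_const_nhds (x := CG))
    simpa using this
  have hdist : ∀ k, ∀ t ∈ Icc a b,
      dist (pairF a b (Jk (φ k)) t) (pairF a b JL t) ≤ ek k := by
    intro k t ht
    have h := sol_dist hab hC (ode_of (hJk (φ k))) (ode_of hJL) ht
    rwa [hJLv] at h
  have hdist1 : ∀ k, ∀ t ∈ Icc a b, dist (Jk (φ k) t) (JL t) ≤ ek k := by
    intro k t ht
    refine le_trans ?_ (hdist k t ht)
    rw [Prod.dist_eq]
    exact le_max_left _ _
  have hdist2 : ∀ k, ∀ t ∈ Icc a b,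
      dist (derivWithin (Jk (φ k)) (Icc a b) t) (derivWithin JL (Icc a b) t) ≤ ek k := by
    intro k t ht
    refine le_trans ?_ (hdist k t ht)
    rw [Prod.dist_eq]
    exact le_max_right _ _
  -- JL t₀ = 0
  have httend : Filter.Tendsto (fun k => tk (φ k)) atTop (nhds t₀) := by
    have := hskφ_to.add (tendsto_const_nhds (x := t₀))
    simp only [hsk] at this
    simpa using this
  have hJLtk : Filter.Tendsto (fun k => JL (tk (φ k))) atTop (nhds (JL t₀)) := by
    have hw : Filter.Tendsto (fun k => tk (φ k)) atTop (nhdsWithin t₀ (Icc a b)) :=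
      tendsto_nhdsWithin_iff.2 ⟨httend, Filter.Eventually.of_forall fun k => htkm (φ k)⟩
    exact Filter.Tendsto.comp ((ode_of hJL).cont t₀ ht₀m) hw
  have hJLt0 : JL t₀ = 0 := by
    have hz : Filter.Tendsto (fun k => JL (tk (φ k))) atTop (nhds 0) := by
      apply squeeze_zero_norm (a := ek)
      · intro k
        have := hdist1 k (tk (φ k)) (htkm (φ k))
        rw [hJk0 (φ k), dist_zero_left] at this
        exact this
      · exact hek_to
    exact tendsto_nhds_unique hJLtk hz
  -- v has norm one
  have hv1 : ‖v‖ = 1 := by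
    have h1 : Filter.Tendsto (fun k => ‖vk (φ k)‖) atTop (nhds ‖v‖) :=
      (continuous_norm.tendsto v).comp hφtend
    have h2 : (fun k => ‖vk (φ k)‖) = fun _ => (1:ℝ) := funext fun k => hJkn (φ k)
    rw [h2] at h1
    exact tendsto_nhds_unique h1 tendsto_const_nhds
  set w₀ : Fin n → ℝ := derivWithin JL (Icc a b) t₀ with hw₀def
  have hw₀ne : w₀ ≠ 0 := by
    intro h
    have := sol_zero_of_zero_at hab hC (ode_of hJL) ht₀m hJLt0 h a (left_mem_Icc.2 hab.le)
    rw [hJLv] at this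
    rw [this, norm_zero] at hv1
    linarith
  -- the rescaled values u_k and their limit -w₀
  set Xk : ℕ → (Fin n → ℝ) := fun k => derivWithin (Jk (φ k)) (Icc a b) t₀ with hXk
  set uk : ℕ → (Fin n → ℝ) := fun k => (sk (φ k))⁻¹ • (Jk (φ k) t₀) with huk
  have htayk : ∀ k, ‖Jk (φ k) t₀ + sk (φ k) • Xk k‖ ≤ C * CG * (sk (φ k))^2 := by
    intro k
    have h := taylor hab hC hC0 (hJbnd (φ k)) (ode_of (hJk (φ k))) ht₀m (htkm (φ k))
    rw [hJk0 (φ k)] at h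
    have e : (0 : Fin n → ℝ) - Jk (φ k) t₀ - (tk (φ k) - t₀) • derivWithin (Jk (φ k)) (Icc a b) t₀
        = -(Jk (φ k) t₀ + sk (φ k) • Xk k) := by
      simp only [hsk, hXk]; abel
    rw [e, norm_neg] at h
    exact h
  have huXk : ∀ k, ‖uk k + Xk k‖ ≤ C * CG * |sk (φ k)| := by
    intro k
    have e : uk k + Xk k = (sk (φ k))⁻¹ • (Jk (φ k) t₀ + sk (φ k) • Xk k) := by
      rw [smul_add, smul_smul, inv_mul_cancel₀ (hskne (φ k)), one_smul]
    rw [e, norm_smul, Real.norm_eq_abs, abs_inv]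
    rw [inv_mul_le_iff₀ (abs_pos.2 (hskne (φ k)))]
    calc ‖Jk (φ k) t₀ + sk (φ k) • Xk k‖ ≤ C * CG * (sk (φ k))^2 := htayk k
      _ = |sk (φ k)| * (C * CG * |sk (φ k)|) := by
          rw [pow_two, ← abs_mul_abs_self (sk (φ k))]
          ring
  have hXk_to : Filter.Tendsto Xk atTop (nhds w₀) := by
    have hd : Filter.Tendsto (fun k => Xk k - w₀) atTop (nhds 0) := by
      apply squeeze_zero_norm (a := ek)
      · intro k
        have := hdist2 k t₀ ht₀m
        rwa [dist_eq_norm] at this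
      · exact hek_to
    have := hd.add (tendsto_const_nhds (x := w₀))
    simpa using this
  have huk_to : Filter.Tendsto uk atTop (nhds (-w₀)) := by
    have hz : Filter.Tendsto (fun k => uk k + Xk k) atTop (nhds 0) := by
      apply squeeze_zero_norm (a := fun k => C * CG * |sk (φ k)|)
      · exact huXk
      · have habs : Filter.Tendsto (fun k => |sk (φ k)|) atTop (nhds 0) := by
          have := hskφ_to.abs
          simpa using this
        have := (tendsto_const_nhds (x := C * CG)).mul habs
        simpa using this
    have := hz.sub hXk_to
    have e : (fun k => uk k + Xk k - Xk k) = uk := by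
      funext k; exact add_sub_cancel_right _ _
    rw [e] at this
    simpa using this
  -- w₀ belongs to 𝕁[t₀]
  have hw₀mem : w₀ ∈ solSpace g R P S a b t₀ := by
    have hneg : -w₀ ∈ Vsol g R P S t₀ hab := by
      refine ((Vsol g R P S t₀ hab).closed_of_finiteDimensional).mem_of_tendsto huk_to
        (Filter.Eventually.of_forall fun k => ?_)
      exact (Vsol g R P S t₀ hab).smul_mem _ ⟨Jk (φ k), hJk (φ k), rfl⟩
    have := (Vsol g R P S t₀ hab).neg_mem hneg
    rw [neg_neg] at this
    exact this
  -- orthogonality of w₀ to 𝕁[t₀]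
  have horto : ∀ y ∈ solSpace g R P S a b t₀, g w₀ y = 0 := by
    intro y hy
    obtain ⟨Jt, hJt, hJty⟩ := hy
    set Yt : Fin n → ℝ := derivWithin Jt (Icc a b) t₀ with hYt
    set U : ℝ := CG + C * CG * (b - a) with hU
    have hba : (0:ℝ) ≤ b - a := by linarith
    have hU0 : 0 ≤ U := by
      rw [hU]
      have := mul_nonneg (mul_nonneg hC0 hCG0.le) hba
      linarith
    have huk_norm : ∀ k, ‖uk k‖ ≤ U := by
      intro k
      calc ‖uk k‖ = ‖(uk k + Xk k) - Xk k‖ := by rw [add_sub_cancel_right]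
        _ ≤ ‖uk k + Xk k‖ + ‖Xk k‖ := norm_sub_le _ _
        _ ≤ C * CG * |sk (φ k)| + CG := add_le_add (huXk k) (hXbnd (φ k))
        _ ≤ U := by
            have h1 : C * CG * |sk (φ k)| ≤ C * CG * (b - a) :=
              mul_le_mul_of_nonneg_left (hskabs (φ k)) (mul_nonneg hC0 hCG0.le)
            rw [hU]; linarith
    set D : ℝ := ‖gc g‖ * (C * CG * ‖y‖ + U * ‖Yt‖) with hD
    have hD0 : 0 ≤ D := by
      rw [hD]
      refine mul_nonneg (norm_nonneg (gc g)) (add_nonneg ?_ ?_)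
      · exact mul_nonneg (mul_nonneg hC0 hCG0.le) (norm_nonneg _)
      · exact mul_nonneg hU0 (norm_nonneg _)
    have hck : ∀ k, |g (uk k) y| ≤ |sk (φ k)| * D := by
      intro k
      set s : ℝ := sk (φ k) with hs
      have hsne' : s ≠ 0 := hskne (φ k)
      have hlag : g (Xk k) y = s * (g (uk k) Yt) := by
        have hl := lagrangian hab hgsymm hRsymm hSsymm (hJk (φ k)) hJt ht₀m
        rw [hJty] at hl
        -- hl : g (Xk k) y = g (Jk (φ k) t₀) Yt
        have hp : Jk (φ k) t₀ = s • uk k := (smul_inv_smul₀ hsne' _).symm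
        rw [hl, hp, map_smul]
        simp [hYt]
      have heq : s * (g (uk k) y)
          = g (Jk (φ k) t₀ + s • Xk k) y - s * (s * (g (uk k) Yt)) := by
        have hp : Jk (φ k) t₀ = s • uk k := (smul_inv_smul₀ hsne' _).symm
        have h3 : g (Jk (φ k) t₀ + s • Xk k) y
            = s * (g (uk k) y) + s * (g (Xk k) y) := by
          rw [hp]
          simp only [map_add, map_smul, LinearMap.add_apply, LinearMap.smul_apply,
            smul_eq_mul]
        rw [h3, hlag]
        ring
      have hb1 : |g (Jk (φ k) t₀ + s • Xk k) y| ≤ ‖gc g‖ * (C * CG * s^2) * ‖y‖ := by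
        refine le_trans (g_bound g _ y) ?_
        refine mul_le_mul_of_nonneg_right ?_ (norm_nonneg _)
        exact mul_le_mul_of_nonneg_left (htayk k) (norm_nonneg (gc g))
      have hb2 : |g (uk k) Yt| ≤ ‖gc g‖ * U * ‖Yt‖ := by
        refine le_trans (g_bound g _ _) ?_
        refine mul_le_mul_of_nonneg_right ?_ (norm_nonneg _)
        exact mul_le_mul_of_nonneg_left (huk_norm k) (norm_nonneg (gc g))
      have hsq : s^2 = |s| * |s| := by rw [pow_two, ← abs_mul_abs_self]
      have hterm2 : |s * (s * (g (uk k) Yt))| ≤ s^2 * (‖gc g‖ * U * ‖Yt‖) := by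
        rw [abs_mul, abs_mul, hsq]
        calc |s| * (|s| * |g (uk k) Yt|)
            ≤ |s| * (|s| * (‖gc g‖ * U * ‖Yt‖)) :=
              mul_le_mul_of_nonneg_left
                (mul_le_mul_of_nonneg_left hb2 (abs_nonneg s)) (abs_nonneg s)
          _ = |s| * |s| * (‖gc g‖ * U * ‖Yt‖) := by ring
      have hfin : |s| * |g (uk k) y| ≤ |s| * (|s| * D) := by
        rw [← abs_mul]
        calc |s * g (uk k) y|
            ≤ |g (Jk (φ k) t₀ + s • Xk k) y| + |s * (s * (g (uk k) Yt))| := by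
              rw [heq, sub_eq_add_neg]
              simpa using abs_add_le (g (Jk (φ k) t₀ + s • Xk k) y)
                (-(s * (s * (g (uk k) Yt))))
          _ ≤ ‖gc g‖ * (C * CG * s^2) * ‖y‖ + s^2 * (‖gc g‖ * U * ‖Yt‖) :=
              add_le_add hb1 hterm2
          _ = |s| * (|s| * D) := by
              have e2 : |s| * (|s| * D) = s^2 * D := by
                rw [← mul_assoc, abs_mul_abs_self, ← pow_two]
              rw [e2, hD]; ring
      exact le_of_mul_le_mul_left hfin (abs_pos.2 hsne')
    have hc_to0 : Filter.Tendsto (fun k => g (uk k) y) atTop (nhds 0) := by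
      apply squeeze_zero_norm (a := fun k => |sk (φ k)| * D)
      · intro k; rw [Real.norm_eq_abs]; exact hck k
      · have habs : Filter.Tendsto (fun k => |sk (φ k)|) atTop (nhds 0) := by
          have := hskφ_to.abs; simpa using this
        have := habs.mul (tendsto_const_nhds (x := D))
        simpa using this
    have hc_tow : Filter.Tendsto (fun k => g (uk k) y) atTop (nhds (g (-w₀) y)) := by
      have hcont : Continuous (fun x : Fin n → ℝ => ((gc g).flip y) x) :=
        ((gc g).flip y).continuous
      have := (hcont.tendsto (-w₀)).comp huk_to
      exact this
    have h0 : g (-w₀) y = 0 := tendsto_nhds_unique hc_tow hc_to0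
    simpa only [map_neg, LinearMap.neg_apply, neg_eq_zero] using h0
  have := hnd w₀ hw₀mem horto
  exact hw₀ne this

end FocalAux

/-- (i) If `t₀ ∈ (a,b]` is a `(P,S)`-focal instant and `g` is nondegenerate on `𝕁[t₀]`,
then no nearby instant (other than `t₀`) in `(a,b]` is `(P,S)`-focal.
(ii) There are no `(P,S)`-focal instants near the initial instant `a`. -/
theorem focal_instants_isolated {n : ℕ}
    (g : (Fin n → ℝ) →ₗ[ℝ] (Fin n → ℝ) →ₗ[ℝ] ℝ)
    (R : ℝ → (Fin n → ℝ) →L[ℝ] (Fin n → ℝ))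
    (P : Submodule ℝ (Fin n → ℝ)) (S : (Fin n → ℝ) →ₗ[ℝ] (Fin n → ℝ))
    (a b : ℝ) (hab : a < b)
    (hgsymm : ∀ x y, g x y = g y x)
    (hgnd : ∀ x, (∀ y, g x y = 0) → x = 0)
    (hRcont : ContinuousOn R (Icc a b))
    (hRsymm : ∀ t ∈ Icc a b, ∀ x y, g (R t x) y = g x (R t y))
    (hPnd : ∀ x ∈ P, (∀ y ∈ P, g x y = 0) → x = 0)
    (hSP : ∀ x ∈ P, S x ∈ P)
    (hSsymm : ∀ x ∈ P, ∀ y ∈ P, g (S x) y = g x (S y))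
    (t₀ : ℝ) :
    (t₀ ∈ Ioc a b → IsFocal g R P S a b t₀ →
      (∀ x ∈ solSpace g R P S a b t₀,
        (∀ y ∈ solSpace g R P S a b t₀, g x y = 0) → x = 0) →
      ∃ δ > 0, ∀ t ∈ Ioc a b, t ≠ t₀ → |t - t₀| < δ → ¬ IsFocal g R P S a b t) ∧
    (∃ ε > 0, ∀ t ∈ Ioc a b, t ≤ a + ε → ¬ IsFocal g R P S a b t) := by
  constructor
  · intro ht₀ _ hnd
    exact FocalAux.part1 hab hgsymm hRcont hRsymm hSsymm ht₀ hnd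
  · exact FocalAux.part2 hab hRcont hPnd
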